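/- arXiv:2605.08848 — 2 statements merged into one kernel-verified Lean document; each statement's English description precedes it below -/
import Mathlib

section
/- Let s ≥ 2 be an integer. Then every K_{s,s}-free graph G is (1/(4s), 2·R(s, ω(G)+1))-sparse. -/
open SimpleGraph

/-- The chromatic number of a graph as a natural number. -/
noncomputable def chromNum {V : Type*} (G : SimpleGraph V) : ℕ :=
  G.chromaticNumber.toNat

/-- The stability (independence) number of a graph. -/
noncomputable def indepNum {V : Type*} (G : SimpleGraph V) : ℕ := Gᶜ.cliqueNum

/-- A stable (independent) set in a graph. -/
def IsStableSet {V : Type*} (G : SimpleGraph V) (S : Finset V) : Prop :=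
  ∀ u ∈ S, ∀ v ∈ S, ¬ G.Adj u v

/-- The Ramsey number `R(s,w)`: the least `n ≥ 1` such that every graph on `n`
vertices contains a stable set of size `s` or a clique of size `w`. -/
noncomputable def ramsey (s w : ℕ) : ℕ :=
  sInf {n : ℕ | 1 ≤ n ∧ ∀ G : SimpleGraph (Fin n),
    (∃ S : Finset (Fin n), IsStableSet G S ∧ S.card = s) ∨
    (∃ S : Finset (Fin n), G.IsNClique w S)}

/-- `G` has no induced subgraph isomorphic to `H`. -/
def IndFree {W V : Type*} (H : SimpleGraph W) (G : SimpleGraph V) : Prop :=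
  ¬ Nonempty (H ↪g G)

/-- The number of ordered pairs `(a,b) ∈ A × B` forming an edge of `G`. -/
noncomputable def eCount {V : Type*} (G : SimpleGraph V) (A B : Finset V) : ℕ :=
  Set.ncard {p : V × V | p.1 ∈ A ∧ p.2 ∈ B ∧ G.Adj p.1 p.2}

/-- A graph is `(c,t)`-sparse if every two vertex subsets of size at least `t`
span at most a `(1-c)` fraction of the possible ordered adjacent pairs. -/
def CTSparse {V : Type*} [Fintype V] (G : SimpleGraph V) (c : ℝ) (t : ℕ) : Prop :=
  ∀ A B : Finset V, t ≤ A.card → t ≤ B.card →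
    (eCount G A B : ℝ) ≤ (1 - c) * A.card * B.card

lemma ramsey_finset : ∀ k s w : ℕ, s + w ≤ k → ∀ {V : Type} (G : SimpleGraph V) (U : Finset V),
    Nat.choose (s + w) s ≤ U.card →
    (∃ S : Finset V, S ⊆ U ∧ IsStableSet G S ∧ S.card = s) ∨
    (∃ S : Finset V, S ⊆ U ∧ G.IsNClique w S) := by
  intro k
  induction k with
  | zero =>
    intro s w hsw V G U _
    have hs : s = 0 := by omega
    subst hs
    exact Or.inl ⟨∅, by simp, by simp [IsStableSet], rfl⟩
  | succ k ih =>
    intro s w hsw V G U hU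
    classical
    match s, w with
    | 0, w => exact Or.inl ⟨∅, by simp, by simp [IsStableSet], rfl⟩
    | s+1, 0 => exact Or.inr ⟨∅, by simp, SimpleGraph.isNClique_empty.mpr rfl⟩
    | s+1, w+1 =>
      simp only [show s+1+(w+1) = s+w+1+1 by omega] at hU
      have hpos : 0 < Nat.choose (s+w+1+1) (s+1) := Nat.choose_pos (by omega)
      obtain ⟨v, hv⟩ := Finset.card_pos.mp (lt_of_lt_of_le hpos hU)
      set N := (U.erase v).filter (fun u => G.Adj v u) with hN
      set M := (U.erase v).filter (fun u => ¬ G.Adj v u) with hM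
      have hNM : N.card + M.card = U.card - 1 := by
        rw [hN, hM, Finset.card_filter_add_card_filter_not,
          Finset.card_erase_of_mem hv]
      have hp := Nat.choose_succ_succ (s+w+1) s
      simp only [Nat.succ_eq_add_one] at hp
      have key : Nat.choose (s+w+1) (s+1) ≤ N.card ∨ Nat.choose (s+w+1) s ≤ M.card := by
        omega
      have hNU : N ⊆ U := (Finset.filter_subset _ _).trans (Finset.erase_subset _ _)
      have hMU : M ⊆ U := (Finset.filter_subset _ _).trans (Finset.erase_subset _ _)
      rcases key with hkey | hkey
      · rcases ih (s+1) w (by omega) G N (by simpa [show s+1+w = s+w+1 by omega] using hkey) with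
          ⟨S, hSN, hst, hcard⟩ | ⟨S, hSN, hclq⟩
        · exact Or.inl ⟨S, hSN.trans hNU, hst, hcard⟩
        · refine Or.inr ⟨insert v S, Finset.insert_subset hv (hSN.trans hNU), ?_, ?_⟩
          · rw [Finset.coe_insert]
            refine hclq.isClique.insert (fun b hb _ => ?_)
            exact (Finset.mem_filter.mp (hSN hb)).2
          · rw [Finset.card_insert_of_notMem (fun hvS => ?_), hclq.card_eq]
            exact Finset.notMem_erase v U (Finset.mem_of_mem_filter v (hSN hvS))
      · rcases ih s (w+1) (by omega) G M (by simpa [show s+(w+1) = s+w+1 by omega] using hkey) with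
          ⟨S, hSM, hst, hcard⟩ | ⟨S, hSM, hclq⟩
        · refine Or.inl ⟨insert v S, Finset.insert_subset hv (hSM.trans hMU), ?_, ?_⟩
          · intro u hu u' hu' hadj
            rcases Finset.mem_insert.mp hu with rfl | hu2
            · rcases Finset.mem_insert.mp hu' with rfl | hu2'
              · exact G.irrefl hadj
              · exact (Finset.mem_filter.mp (hSM hu2')).2 hadj
            · rcases Finset.mem_insert.mp hu' with rfl | hu2'
              · exact (Finset.mem_filter.mp (hSM hu2)).2 (G.adj_symm hadj)
              · exact hst u hu2 u' hu2' hadj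
          · rw [Finset.card_insert_of_notMem (fun hvS => ?_), hcard]
            exact Finset.notMem_erase v U (Finset.mem_of_mem_filter v (hSM hvS))
        · exact Or.inr ⟨S, hSM.trans hMU, hclq⟩

lemma ramsey_mem (s w : ℕ) : ramsey s w ∈ {n : ℕ | 1 ≤ n ∧ ∀ G : SimpleGraph (Fin n),
    (∃ S : Finset (Fin n), IsStableSet G S ∧ S.card = s) ∨
    (∃ S : Finset (Fin n), G.IsNClique w S)} := by
  apply Nat.sInf_mem
  refine ⟨Nat.choose (s+w) s, Nat.choose_pos (Nat.le_add_right s w), fun G => ?_⟩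
  rcases ramsey_finset (s+w) s w le_rfl G Finset.univ (by simp) with
    ⟨S, _, hst, hcard⟩ | ⟨S, _, hclq⟩
  · exact Or.inl ⟨S, hst, hcard⟩
  · exact Or.inr ⟨S, hclq⟩

lemma ramsey_pos (s w : ℕ) : 1 ≤ ramsey s w := (ramsey_mem s w).1

lemma ramsey_spec {s w : ℕ} {V : Type} (G : SimpleGraph V) (U : Finset V)
    (h : ramsey s w ≤ U.card) :
    (∃ S : Finset V, S ⊆ U ∧ IsStableSet G S ∧ S.card = s) ∨
    (∃ S : Finset V, S ⊆ U ∧ G.IsNClique w S) := by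
  classical
  obtain ⟨U', hU'sub, hU'card⟩ := Finset.exists_subset_card_eq h
  obtain ⟨-, hprop⟩ := ramsey_mem s w
  have e : {x // x ∈ U'} ≃ Fin (ramsey s w) :=
    Fintype.equivFinOfCardEq (by rw [Fintype.card_coe, hU'card])
  set f : Fin (ramsey s w) → V := fun i => ((e.symm i : {x // x ∈ U'}) : V) with hf
  have hfinj : Function.Injective f := fun i j hij =>
    e.symm.injective (Subtype.ext hij)
  have hfmem : ∀ i, f i ∈ U := fun i => hU'sub (e.symm i).2
  rcases hprop (G.comap f) with ⟨S, hst, hcard⟩ | ⟨S, hclq⟩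
  · refine Or.inl ⟨S.image f, ?_, ?_, ?_⟩
    · intro x hx
      obtain ⟨i, _, rfl⟩ := Finset.mem_image.mp hx
      exact hfmem i
    · intro x hx y hy hadj
      obtain ⟨i, hi, rfl⟩ := Finset.mem_image.mp hx
      obtain ⟨j, hj, rfl⟩ := Finset.mem_image.mp hy
      exact hst i hi j hj hadj
    · rw [Finset.card_image_of_injective _ hfinj, hcard]
  · refine Or.inr ⟨S.image f, ?_, ?_, ?_⟩
    · intro x hx
      obtain ⟨i, _, rfl⟩ := Finset.mem_image.mp hx
      exact hfmem i
    · intro x hx y hy hxy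
      simp only [Finset.coe_image, Set.mem_image, Finset.mem_coe] at hx hy
      obtain ⟨i, hi, rfl⟩ := hx
      obtain ⟨j, hj, rfl⟩ := hy
      exact hclq.1 hi hj (fun h => hxy (by rw [h]))
    · rw [Finset.card_image_of_injective _ hfinj, hclq.2]

lemma eCount_eq {V : Type} (G : SimpleGraph V) [DecidableRel G.Adj] (A B : Finset V) :
    Set.ncard {p : V × V | p.1 ∈ A ∧ p.2 ∈ B ∧ G.Adj p.1 p.2}
      = ∑ a ∈ A, (B.filter (fun b => G.Adj a b)).card := by
  classical
  have h1 : {p : V × V | p.1 ∈ A ∧ p.2 ∈ B ∧ G.Adj p.1 p.2}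
      = ↑((A ×ˢ B).filter (fun p => G.Adj p.1 p.2)) := by
    ext p
    simp [Finset.mem_filter, Finset.mem_product, and_assoc]
  rw [h1, Set.ncard_coe_finset, Finset.card_filter, Finset.sum_product]
  exact Finset.sum_congr rfl fun a _ => (Finset.card_filter _ _).symm

/-- for every integer `s ≥ 2`, every `K_{s,s}`-free graph `G` is
`(1/(4s), 2·R(s, ω(G)+1))`-sparse. -/
theorem stmt7 (s : ℕ) (hs : 2 ≤ s) (V : Type) [Fintype V] (G : SimpleGraph V)
    (hfree : IndFree (completeBipartiteGraph (Fin s) (Fin s)) G) :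
    CTSparse G (1 / (4 * (s : ℝ))) (2 * ramsey s (G.cliqueNum + 1)) := by
  classical
  intro A B hA hB
  by_contra hcon
  push_neg at hcon
  set R := ramsey s (G.cliqueNum + 1) with hRdef
  have hR1 : 1 ≤ R := ramsey_pos _ _
  have hs0 : (0:ℝ) < (s:ℝ) := by
    have : 0 < s := by omega
    exact_mod_cast this
  have hs2 : (2:ℝ) ≤ (s:ℝ) := by exact_mod_cast hs
  have hm0 : (0:ℝ) < (B.card : ℝ) := by
    have : 0 < B.card := by omega
    exact_mod_cast this
  -- no clique of size cliqueNum + 1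
  have hstable : ∀ U : Finset V, R ≤ U.card →
      ∃ S, S ⊆ U ∧ IsStableSet G S ∧ S.card = s := by
    intro U hU
    rcases ramsey_spec G U hU with h | ⟨S, _, hclq⟩
    · exact h
    · have h1 : S.card ≤ G.cliqueNum := hclq.isClique.card_le_cliqueNum
      have h2 := hclq.card_eq
      omega
  -- edge count as sum of degrees
  have hsum : (eCount G A B : ℝ) = ∑ a ∈ A, ((B.filter (fun b => G.Adj a b)).card : ℝ) := by
    have h := eCount_eq G A B
    unfold eCount
    rw [h]
    push_cast
    rfl
  -- the set of large-degree vertices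
  set P : V → Prop := fun a =>
    (1 - 1/(2*(s:ℝ))) * B.card < ((B.filter (fun b => G.Adj a b)).card : ℝ) with hPdef
  set A' := A.filter P with hA'def
  set A'' := A.filter (fun a => ¬ P a) with hA''def
  have hxy : (A'.card : ℝ) + A''.card = A.card := by
    rw [hA'def, hA''def]
    exact_mod_cast Finset.card_filter_add_card_filter_not (p := P)
  have b1 : ∑ a ∈ A', ((B.filter (fun b => G.Adj a b)).card : ℝ) ≤ (A'.card : ℝ) * B.card := by
    calc ∑ a ∈ A', ((B.filter (fun b => G.Adj a b)).card : ℝ)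
        ≤ ∑ _a ∈ A', (B.card : ℝ) :=
          Finset.sum_le_sum fun a _ => by exact_mod_cast Finset.card_filter_le B _
      _ = (A'.card : ℝ) * B.card := by rw [Finset.sum_const, nsmul_eq_mul]
  have b2 : ∑ a ∈ A'', ((B.filter (fun b => G.Adj a b)).card : ℝ)
      ≤ (A''.card : ℝ) * ((1 - 1/(2*(s:ℝ))) * B.card) := by
    calc ∑ a ∈ A'', ((B.filter (fun b => G.Adj a b)).card : ℝ)
        ≤ ∑ _a ∈ A'', (1 - 1/(2*(s:ℝ))) * B.card :=
          Finset.sum_le_sum fun a ha => not_lt.mp (Finset.mem_filter.mp ha).2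
      _ = (A''.card : ℝ) * ((1 - 1/(2*(s:ℝ))) * B.card) := by
          rw [Finset.sum_const, nsmul_eq_mul]
  have key3 : (1 - 1/(4*(s:ℝ))) * A.card < A'.card + A''.card * (1 - 1/(2*(s:ℝ))) := by
    have combined : ((1 - 1/(4*(s:ℝ))) * A.card) * B.card
        < ((A'.card : ℝ) + A''.card * (1 - 1/(2*(s:ℝ)))) * B.card := by
      calc ((1 - 1/(4*(s:ℝ))) * A.card) * B.card
          = (1 - 1/(4*(s:ℝ))) * A.card * B.card := by ring
        _ < eCount G A B := hcon
        _ = ∑ a ∈ A, ((B.filter (fun b => G.Adj a b)).card : ℝ) := hsum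
        _ = ∑ a ∈ A', ((B.filter (fun b => G.Adj a b)).card : ℝ)
            + ∑ a ∈ A'', ((B.filter (fun b => G.Adj a b)).card : ℝ) :=
            (Finset.sum_filter_add_sum_filter_not A P _).symm
        _ ≤ (A'.card : ℝ) * B.card + (A''.card : ℝ) * ((1 - 1/(2*(s:ℝ))) * B.card) :=
            add_le_add b1 b2
        _ = ((A'.card : ℝ) + A''.card * (1 - 1/(2*(s:ℝ)))) * B.card := by ring
    exact lt_of_mul_lt_mul_right combined hm0.le
  -- deduce A' is large
  have hA'R : R ≤ A'.card := by
    have h4 : (0:ℝ) < 4*(s:ℝ) := by positivity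
    have expand1 : (1 - 1/(4*(s:ℝ))) * (A.card:ℝ) * (4*(s:ℝ))
        = 4*(s:ℝ)*A.card - A.card := by field_simp
    have expand2 : ((A'.card:ℝ) + A''.card * (1 - 1/(2*(s:ℝ)))) * (4*(s:ℝ))
        = 4*(s:ℝ)*A'.card + 4*(s:ℝ)*A''.card - 2*A''.card := by field_simp; ring
    have hmul := mul_lt_mul_of_pos_right key3 h4
    rw [expand1, expand2] at hmul
    have hss : 4*(s:ℝ)*A.card = 4*(s:ℝ)*A'.card + 4*(s:ℝ)*A''.card := by
      rw [← hxy]; ring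
    have h2y : 2*(A''.card:ℝ) < A.card := by linarith
    have hAn : (2*R : ℝ) ≤ (A.card : ℝ) := by exact_mod_cast hA
    have : (R:ℝ) < A'.card := by push_cast at hAn ⊢; linarith
    exact_mod_cast this.le
  obtain ⟨S, hSA', hSst, hScard⟩ := hstable A' hA'R
  have hSne : S.Nonempty := Finset.card_pos.mp (by omega)
  -- common neighborhood
  set Q : V → Prop := fun b => ∀ a ∈ S, G.Adj a b with hQdef
  set C := B.filter Q with hCdef
  have hCsplit : (C.card : ℝ) + (B.filter (fun b => ¬ Q b)).card = B.card := by
    rw [hCdef]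
    exact_mod_cast Finset.card_filter_add_card_filter_not (p := Q)
  have hsubC : B.filter (fun b => ¬ Q b) ⊆ S.biUnion (fun a => B.filter (fun b => ¬ G.Adj a b)) := by
    intro b hb
    obtain ⟨hbB, hb2⟩ := Finset.mem_filter.mp hb
    have hb2' : ¬ ∀ a ∈ S, G.Adj a b := hb2
    push_neg at hb2'
    obtain ⟨a, ha, hna⟩ := hb2'
    exact Finset.mem_biUnion.mpr ⟨a, ha, Finset.mem_filter.mpr ⟨hbB, hna⟩⟩
  have hCR : R ≤ C.card := by
    have hterm : ∀ a ∈ S, ((B.filter (fun b => ¬ G.Adj a b)).card : ℝ)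
        < (B.card : ℝ) * (1/(2*(s:ℝ))) := by
      intro a ha
      have haA' : P a := (Finset.mem_filter.mp (hSA' ha)).2
      rw [hPdef] at haA'
      have hsplit : ((B.filter (fun b => G.Adj a b)).card : ℝ)
          + ((B.filter (fun b => ¬ G.Adj a b)).card : ℝ) = B.card := by
        exact_mod_cast Finset.card_filter_add_card_filter_not (p := fun b => G.Adj a b)
      nlinarith [hm0]
    have hbig : ((B.filter (fun b => ¬ Q b)).card : ℝ) < (B.card : ℝ) / 2 := by
      calc ((B.filter (fun b => ¬ Q b)).card : ℝ)
          ≤ ((S.biUnion (fun a => B.filter (fun b => ¬ G.Adj a b))).card : ℝ) := by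
            exact_mod_cast Finset.card_le_card hsubC
        _ ≤ ∑ a ∈ S, ((B.filter (fun b => ¬ G.Adj a b)).card : ℝ) := by
            exact_mod_cast Finset.card_biUnion_le
        _ < ∑ _a ∈ S, (B.card : ℝ) * (1/(2*(s:ℝ))) :=
            Finset.sum_lt_sum_of_nonempty hSne hterm
        _ = (s : ℝ) * ((B.card : ℝ) * (1/(2*(s:ℝ)))) := by
            rw [Finset.sum_const, nsmul_eq_mul, hScard]
        _ = (B.card : ℝ) / 2 := by field_simp
    have hBn : (2*R : ℝ) ≤ (B.card : ℝ) := by exact_mod_cast hB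
    have : (R:ℝ) < C.card := by push_cast at hBn ⊢; linarith
    exact_mod_cast this.le
  obtain ⟨T, hTC, hTst, hTcard⟩ := hstable C hCR
  -- S and T are completely joined and disjoint
  have hadjST : ∀ x ∈ S, ∀ y ∈ T, G.Adj x y := by
    intro x hx y hy
    have := (Finset.mem_filter.mp (hTC hy)).2
    rw [hQdef] at this
    exact this x hx
  have hST : ∀ x, x ∈ S → x ∈ T → False := fun x hxS hxT =>
    G.irrefl (hadjST x hxS x hxT)
  -- build the induced K_{s,s}
  have eS : {x // x ∈ S} ≃ Fin s := Fintype.equivFinOfCardEq (by rw [Fintype.card_coe, hScard])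
  have eT : {x // x ∈ T} ≃ Fin s := Fintype.equivFinOfCardEq (by rw [Fintype.card_coe, hTcard])
  set f : Fin s ⊕ Fin s → V :=
    Sum.elim (fun i => ((eS.symm i : {x // x ∈ S}) : V)) (fun i => ((eT.symm i : {x // x ∈ T}) : V))
    with hf
  have hinj : Function.Injective f := by
    intro x y hxy
    rcases x with i | i <;> rcases y with j | j <;>
      simp only [hf, Sum.elim_inl, Sum.elim_inr] at hxy
    · rw [eS.symm.injective (Subtype.ext hxy)]
    · exact absurd hxy (fun h => hST _ (h ▸ (eS.symm i).2) (eT.symm j).2)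
    · exact absurd hxy (fun h => hST _ (eS.symm j).2 (h ▸ (eT.symm i).2))
    · rw [eT.symm.injective (Subtype.ext hxy)]
  refine hfree ⟨⟨⟨f, hinj⟩, @fun x y => ?_⟩⟩
  rcases x with i | i <;> rcases y with j | j <;>
    simp only [hf, Sum.elim_inl, Sum.elim_inr, Function.Embedding.coeFn_mk,
      completeBipartiteGraph_adj, Sum.isLeft_inl, Sum.isRight_inl, Sum.isLeft_inr,
      Sum.isRight_inr, true_and, and_true, false_and, and_false, or_false, false_or,
      Bool.false_eq_true, or_self, iff_true, iff_false]
  · exact hSst _ (eS.symm i).2 _ (eS.symm j).2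
  · exact hadjST _ (eS.symm i).2 _ (eT.symm j).2
  · exact G.adj_symm (hadjST _ (eS.symm j).2 _ (eT.symm i).2)
  · exact hTst _ (eT.symm i).2 _ (eT.symm j).2
end

section
/- Let c ∈ (0, 1/2) be real and let h ≥ 0 and t ≥ 1 be integers. Let (T,r) be a ((4/c)^h · t, h)-wide rooted tree, let G be a (c,t)-sparse graph, and let φ be a skeleton from (T,r) to G. Let X ⊆ V(G) \ (φ(V(T)) ∪ N_G(φ(r))) with |X| ≥ (4/c)^h · t. Then there exists Y ⊆ X with |Y| ≥ (c/4)^h · |X| such that every vertex of Y is 2(c/4)^(h+1)-good for φ. -/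
open SimpleGraph

/-- `v` is a child of `u` in the tree `T` rooted at `r`. -/
def IsChild {V : Type*} (T : SimpleGraph V) (r u v : V) : Prop :=
  T.Adj u v ∧ T.dist r v = T.dist r u + 1

/-- The depth of the tree `T` rooted at `r`: the maximum height of a vertex. -/
noncomputable def rootDepth {V : Type*} (T : SimpleGraph V) (r : V) : ℕ :=
  sSup (Set.range (T.dist r))

/-- The rooted tree `(T,r)` is `(d,h)`-wide: its depth is `h` and every vertex
of height less than `h` has at least `d` children. -/
def IsWide {V : Type*} (T : SimpleGraph V) (r : V) (d : ℝ) (h : ℕ) : Prop :=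
  rootDepth T r = h ∧
  ∀ u : V, T.dist r u < h → d ≤ (Set.ncard {v : V | IsChild T r u v} : ℝ)

/-- A leaf of the rooted tree `(T,r)`: a non-root vertex with no children. -/
def IsTreeLeaf {V : Type*} (T : SimpleGraph V) (r l : V) : Prop :=
  l ≠ r ∧ ∀ v : V, ¬ IsChild T r l v

/-- `x` lies on the (unique) path from `r` to `l` in the tree `T`. -/
def OnRootPath {V : Type*} (T : SimpleGraph V) (r l x : V) : Prop :=
  T.dist r x + T.dist x l = T.dist r l

/-- A skeleton from the rooted tree `(T,r)` to `G`: a locally injective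
homomorphism mapping every root-to-leaf path of `(T,r)` onto an induced path
of `G`. -/
def IsSkeleton {V W : Type*} (T : SimpleGraph V) (r : V) (G : SimpleGraph W)
    (φ : T →g G) : Prop :=
  (∀ v : V, Set.InjOn φ (T.neighborSet v)) ∧
  ∀ l : V, IsTreeLeaf T r l →
    Set.InjOn φ {x : V | OnRootPath T r l x} ∧
    ∀ x y : V, OnRootPath T r l x → OnRootPath T r l y →
      (G.Adj (φ x) (φ y) ↔ T.Adj x y)

/-- `G` contains a `(d,h)`-skeleton: a skeleton from some `(d,h)`-wide finite
rooted tree to `G`. -/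
def HasSkeleton {W : Type*} (G : SimpleGraph W) (d : ℝ) (h : ℕ) : Prop :=
  ∃ (V : Type) (_ : Fintype V) (T : SimpleGraph V) (r : V),
    T.IsTree ∧ IsWide T r d h ∧ ∃ φ : T →g G, IsSkeleton T r G φ

/-- An `ε`-subtree of `(T,r)`, given by its vertex set `S`: a rooted subtree
with the same root in which every vertex retains at least an `ε` fraction of
its children. -/
def IsEpsSubtree {V : Type*} (T : SimpleGraph V) (r : V) (ε : ℝ) (S : Set V) : Prop :=
  r ∈ S ∧ (T.induce S).Connected ∧
  ∀ u ∈ S, ε * (Set.ncard {v : V | IsChild T r u v} : ℝ) ≤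
    (Set.ncard {v : V | v ∈ S ∧ IsChild T r u v} : ℝ)

/-- A vertex `v ∉ φ(V(T))` is `ε`-good for the skeleton `φ` if some `ε`-subtree
of `(T,r)` has image avoiding the closed neighbourhood of `v`. -/
def EpsGood {V W : Type*} (T : SimpleGraph V) (r : V) (G : SimpleGraph W)
    (φ : T →g G) (ε : ℝ) (v : W) : Prop :=
  v ∉ Set.range φ ∧
  ∃ S : Set V, IsEpsSubtree T r ε S ∧ ∀ x ∈ S, φ x ≠ v ∧ ¬ G.Adj v (φ x)

/-! ### Auxiliary material for the proof -/

/-- `x` is a descendant of `u` (relative to root `r`). -/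
def Desc {V : Type*} (T : SimpleGraph V) (r u x : V) : Prop :=
  T.dist r x = T.dist r u + T.dist u x

lemma desc_refl {V : Type*} (T : SimpleGraph V) (r u : V) : Desc T r u u := by
  simp [Desc, SimpleGraph.dist_self]

lemma desc_trans {V : Type*} {T : SimpleGraph V} (hT : T.Connected) {r u w x : V}
    (hw : Desc T r u w) (hx : Desc T r w x) :
    Desc T r u x ∧ T.dist u x = T.dist u w + T.dist w x := by
  have t1 : T.dist u x ≤ T.dist u w + T.dist w x := hT.dist_triangle
  have t2 : T.dist r x ≤ T.dist r u + T.dist u x := hT.dist_triangle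
  unfold Desc at *
  omega

lemma child_desc {V : Type*} {T : SimpleGraph V} (hT : T.Connected) {r w x : V}
    (hx : IsChild T r w x) : Desc T r w x ∧ T.dist w x = 1 := by
  obtain ⟨hadj, hd⟩ := hx
  have h1 : T.dist w x ≤ 1 := by
    rw [← SimpleGraph.dist_eq_one_iff_adj.2 hadj]
  have t2 : T.dist r x ≤ T.dist r w + T.dist w x := hT.dist_triangle
  unfold Desc
  omega

lemma desc_child {V : Type*} {T : SimpleGraph V} (hT : T.Connected) {r u w x : V}
    (hw : Desc T r u w) (hx : IsChild T r w x) :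
    Desc T r u x ∧ T.dist u x = T.dist u w + 1 := by
  obtain ⟨h1, h2⟩ := child_desc hT hx
  obtain ⟨h3, h4⟩ := desc_trans hT hw h1
  exact ⟨h3, by omega⟩

/-- Connectivity of a star-shaped union of connected induced subgraphs. -/
lemma induce_union_connected {V : Type*} (T : SimpleGraph V) (u : V) (D : Finset V)
    (F : V → Set V)
    (hconn : ∀ i ∈ D, (T.induce (F i)).Connected)
    (hmem : ∀ i ∈ D, i ∈ F i)
    (hadj : ∀ i ∈ D, T.Adj u i) :
    (T.induce (insert u (⋃ i ∈ (D : Set V), F i))).Connected := by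
  set S : Set V := insert u (⋃ i ∈ (D : Set V), F i) with hS
  have huS : u ∈ S := Set.mem_insert _ _
  rw [SimpleGraph.connected_iff]
  refine ⟨?_, ⟨⟨u, huS⟩⟩⟩
  have key : ∀ x : S, (T.induce S).Reachable x ⟨u, huS⟩ := by
    rintro ⟨x, hx⟩
    rcases Set.mem_insert_iff.1 hx with rfl | hx'
    · exact SimpleGraph.Reachable.refl _
    · obtain ⟨i, hiD, hxF⟩ := Set.mem_iUnion₂.1 hx'
      have hiD' : i ∈ D := hiD
      have hsub : F i ⊆ S := by
        intro z hz
        exact Set.mem_insert_iff.2 (Or.inr (Set.mem_iUnion₂.2 ⟨i, hiD, hz⟩))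
      have h1 : (T.induce (F i)).Reachable ⟨x, hxF⟩ ⟨i, hmem i hiD'⟩ :=
        (hconn i hiD').preconnected _ _
      have h2 : (T.induce S).Reachable ⟨x, hsub hxF⟩ ⟨i, hsub (hmem i hiD')⟩ :=
        h1.map (T.induceHomOfLE hsub).toHom
      have h3 : (T.induce S).Adj ⟨i, hsub (hmem i hiD')⟩ ⟨u, huS⟩ := by
        exact (hadj i hiD').symm
      exact h2.trans h3.reachable
  intro x y
  exact (key x).trans (key y).symm

lemma induce_singleton_connected {V : Type*} (T : SimpleGraph V) (u : V) :
    (T.induce ({u} : Set V)).Connected := by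
  rw [SimpleGraph.connected_iff]
  refine ⟨?_, ⟨⟨u, rfl⟩⟩⟩
  rintro ⟨x, hx⟩ ⟨y, hy⟩
  cases hx; cases hy
  exact SimpleGraph.Reachable.refl _

/-- Goodness below `u` at level `k`. -/
def GoodAt {V W : Type*} (c : ℝ) (T : SimpleGraph V) (r : V) (G : SimpleGraph W)
    (φ : T →g G) (k : ℕ) (u : V) (v : W) : Prop :=
  v ∉ Set.range ⇑φ ∧
  ∃ S : Set V, u ∈ S ∧ (∀ x ∈ S, Desc T r u x) ∧ (T.induce S).Connected ∧
    (∀ w ∈ S, 2 * (c/4)^(k+1) * (Set.ncard {z : V | IsChild T r w z} : ℝ) ≤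
        (Set.ncard {z : V | z ∈ S ∧ IsChild T r w z} : ℝ)) ∧
    ∀ x ∈ S, φ x ≠ v ∧ ¬ G.Adj v (φ x)

set_option maxHeartbeats 3200000 in
theorem aux_main (c : ℝ) (hc0 : 0 < c) (hc2 : c < 1 / 2) (t : ℕ) (ht : 1 ≤ t)
    (V : Type) [Fintype V] (T : SimpleGraph V) (hT : T.Connected) (r : V)
    (W : Type) [Fintype W] (G : SimpleGraph W) (hG : CTSparse G c t)
    (φ : T →g G) (hφ : ∀ v : V, Set.InjOn φ (T.neighborSet v)) :
    ∀ k : ℕ, ∀ u : V,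
    (∀ w : V, Desc T r u w → T.dist u w < k →
        (4/c)^k * t ≤ (Set.ncard {z : V | IsChild T r w z} : ℝ)) →
    (∀ w : V, Desc T r u w → k ≤ T.dist u w → {z : V | IsChild T r w z} = ∅) →
    ∀ X : Set W, X ⊆ (Set.range ⇑φ ∪ G.neighborSet (φ u))ᶜ →
      (4/c)^k * t ≤ (X.ncard : ℝ) →
    ∃ Y : Set W, Y ⊆ X ∧ (c/4)^k * X.ncard ≤ (Y.ncard : ℝ) ∧
      ∀ v ∈ Y, GoodAt c T r G φ k u v := by
  classical
  have h4c : (1:ℝ) ≤ 4/c := by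
    rw [le_div_iff₀ hc0]; linarith
  have h4cpos : (0:ℝ) < 4/c := by positivity
  have hc4pos : (0:ℝ) < c/4 := by positivity
  have hc4lt : c/4 < 1 := by linarith
  intro k
  induction k with
  | zero =>
    intro u hbig hzero X hX1 hX2
    refine ⟨X, subset_rfl, by simp, ?_⟩
    intro v hv
    have hvr : v ∉ Set.range ⇑φ := by
      have := hX1 hv
      simp only [Set.mem_compl_iff, Set.mem_union] at this
      tauto
    have hvn : ¬ G.Adj (φ u) v := by
      have := hX1 hv
      simp only [Set.mem_compl_iff, Set.mem_union, SimpleGraph.mem_neighborSet] at this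
      tauto
    refine ⟨hvr, ({u} : Set V), Set.mem_singleton u, ?_, ?_, ?_, ?_⟩
    · intro x hx
      rw [Set.mem_singleton_iff] at hx; subst hx
      exact desc_refl T r x
    · exact induce_singleton_connected T u
    · intro w hw
      rw [Set.mem_singleton_iff] at hw; subst hw
      have hz : {z : V | IsChild T r w z} = ∅ :=
        hzero w (desc_refl T r w) (Nat.zero_le _)
      rw [hz]
      simp
    · intro x hx
      rw [Set.mem_singleton_iff] at hx; subst hx
      refine ⟨fun h => hvr ⟨x, h⟩, fun h => hvn h.symm⟩
  | succ k IH =>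
    intro u hbig hzero X hX1 hX2
    -- children of u
    set Cset : Set V := {z : V | IsChild T r u z} with hCset
    have hCfin : Cset.Finite := Set.toFinite _
    set Cs : Finset V := hCfin.toFinset with hCs
    have hCsmem : ∀ w, w ∈ Cs ↔ IsChild T r u w := by
      intro w; rw [hCs, Set.Finite.mem_toFinset]; rfl
    set m : ℕ := Cs.card with hm
    have hmC : (Cset.ncard : ℝ) = m := by
      rw [hm, hCs, ← Set.ncard_coe_finset, Set.Finite.coe_toFinset]
    have hpow_le : ∀ a b : ℕ, a ≤ b → (4/c)^a ≤ (4/c)^b := fun a b hab =>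
      pow_le_pow_right₀ h4c hab
    have hone_le_pow : ∀ a : ℕ, (1:ℝ) ≤ (4/c)^a := fun a => one_le_pow₀ h4c
    have hmbig : (4/c)^(k+1) * t ≤ (m : ℝ) := by
      rw [← hmC]
      exact hbig u (desc_refl T r u) (by simp [SimpleGraph.dist_self])
    have htpos : (1:ℝ) ≤ (t:ℝ) := by exact_mod_cast ht
    have htm : (t : ℝ) ≤ m := le_trans (by nlinarith [hone_le_pow (k+1)]) hmbig
    have htmn : t ≤ m := by exact_mod_cast htm
    have hmpos : 0 < m := lt_of_lt_of_le ht htmn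
    -- X as a finset
    have hXfin : X.Finite := Set.toFinite _
    set Xf : Finset W := hXfin.toFinset with hXf
    have hXfmem : ∀ x, x ∈ Xf ↔ x ∈ X := by
      intro x; rw [hXf, Set.Finite.mem_toFinset]
    set n : ℕ := Xf.card with hn
    have hnX : (X.ncard : ℝ) = n := by
      rw [hn, hXf, ← Set.ncard_coe_finset, Set.Finite.coe_toFinset]
    have hnbig : (4/c)^(k+1) * t ≤ (n : ℝ) := by rw [← hnX]; exact hX2
    have htn : (t : ℝ) ≤ n := le_trans (by nlinarith [hone_le_pow (k+1)]) hnbig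
    have htnn : t ≤ n := by exact_mod_cast htn
    -- X not in range of φ
    have hXrange : ∀ x ∈ X, x ∉ Set.range ⇑φ := by
      intro x hx
      have := hX1 hx
      simp only [Set.mem_compl_iff, Set.mem_union] at this
      tauto
    -- the split of X along each child
    set Nf : V → Finset W := fun w => Xf.filter (fun x => G.Adj (φ w) x) with hNf
    set Xw : V → Finset W := fun w => Xf.filter (fun x => ¬ G.Adj (φ w) x) with hXw
    have hsplit : ∀ w, (Nf w).card + (Xw w).card = n := by
      intro w
      rw [hNf, hXw, hn]
      exact Finset.card_filter_add_card_filter_not _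
    -- sparsity: claim A
    have hchild_nbr : ∀ w ∈ Cs, w ∈ T.neighborSet u := by
      intro w hw
      exact ((hCsmem w).1 hw).1
    have hinjC : ∀ x ∈ Cs, ∀ y ∈ Cs, φ x = φ y → x = y := by
      intro x hx y hy hxy
      exact hφ u (hchild_nbr x hx) (hchild_nbr y hy) hxy
    set A : Finset W := Cs.image φ with hA
    have hAcard : A.card = m := by
      rw [hA, hm]
      exact Finset.card_image_of_injOn (fun x hx y hy => hinjC x hx y hy)
    have hsum_image : ∑ a ∈ A, (Xf.filter (fun x => G.Adj a x)).card
        = ∑ w ∈ Cs, (Nf w).card := by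
      rw [hA]
      exact Finset.sum_image hinjC
    have heC : eCount G A Xf = ∑ a ∈ A, (Xf.filter (fun x => G.Adj a x)).card := by
      unfold eCount
      have hset : {p : W × W | p.1 ∈ A ∧ p.2 ∈ Xf ∧ G.Adj p.1 p.2}
          = ↑((A ×ˢ Xf).filter (fun p => G.Adj p.1 p.2)) := by
        ext ⟨p1, p2⟩
        simp [Finset.mem_filter, Finset.mem_product, and_assoc]
      rw [hset, Set.ncard_coe_finset]
      rw [Finset.card_eq_sum_card_fiberwise
        (f := Prod.fst) (t := A)
        (fun p hp => (Finset.mem_product.1 (Finset.mem_filter.1 hp).1).1)]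
      refine Finset.sum_congr rfl ?_
      intro a ha
      have hfib : Finset.filter (fun p => p.1 = a)
            ((A ×ˢ Xf).filter (fun p => G.Adj p.1 p.2))
          = (Xf.filter (fun x => G.Adj a x)).map
              ⟨fun x => (a, x), fun x y h => congrArg Prod.snd h⟩ := by
        ext ⟨p1, p2⟩
        simp only [Finset.mem_filter, Finset.mem_product, Finset.mem_map,
          Function.Embedding.coeFn_mk, Prod.mk.injEq]
        constructor
        · rintro ⟨⟨⟨h1, h2⟩, h3⟩, rfl⟩
          exact ⟨p2, ⟨h2, h3⟩, rfl⟩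
        · rintro ⟨x, ⟨hx1, hx2⟩, rfl, rfl⟩
          exact ⟨⟨⟨ha, hx1⟩, hx2⟩, rfl⟩
      rw [hfib, Finset.card_map]
    have claimA : (↑(∑ w ∈ Cs, (Nf w).card) : ℝ) ≤ (1 - c) * m * n := by
      rw [← hsum_image, ← heC]
      have := hG A Xf (by rw [hAcard]; exact htmn) htnn
      rw [hAcard] at this
      convert this using 3 <;> norm_cast
    have claimB : c * m * n ≤ (↑(∑ w ∈ Cs, (Xw w).card) : ℝ) := by
      have h1 : ∑ w ∈ Cs, ((Nf w).card + (Xw w).card) = m * n := by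
        rw [Finset.sum_congr rfl (fun w _ => hsplit w)]
        simp [hm, mul_comm]
      have h2 : (∑ w ∈ Cs, (Nf w).card) + (∑ w ∈ Cs, (Xw w).card) = m * n := by
        rw [← Finset.sum_add_distrib]; exact h1
      have h3 : ((∑ w ∈ Cs, (Nf w).card : ℕ) : ℝ) + ((∑ w ∈ Cs, (Xw w).card : ℕ) : ℝ)
          = (m : ℝ) * n := by exact_mod_cast congrArg (Nat.cast (R := ℝ)) h2
      nlinarith [claimA]
    -- children with a large non-neighbourhood
    set D : Finset V := Cs.filter (fun w => (4/c)^k * t ≤ ((Xw w).card : ℝ)) with hD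
    have hDsub : D ⊆ Cs := Finset.filter_subset _ _
    have hcn : (4/c)^k * t ≤ (c/4) * n := by
      have h1 : (c/4) * ((4/c)^(k+1) * t) = (4/c)^k * t := by
        have hcc : (c/4) * (4/c) = 1 := by
          rw [div_mul_div_comm, mul_comm c 4]; exact div_self (by positivity)
        rw [pow_succ]
        linear_combination ((4/c)^k * t) * hcc
      nlinarith [hnbig]
    have claimC : (3*c/4) * m * n ≤ ∑ w ∈ D, ((Xw w).card : ℝ) := by
      have hsplit2 : ∑ w ∈ Cs, ((Xw w).card : ℝ)
          = (∑ w ∈ D, ((Xw w).card : ℝ))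
            + ∑ w ∈ Cs.filter (fun w => ¬ ((4/c)^k * t ≤ ((Xw w).card : ℝ))), ((Xw w).card : ℝ) := by
        rw [hD]
        exact (Finset.sum_filter_add_sum_filter_not Cs _ _).symm
      have hbad : ∑ w ∈ Cs.filter (fun w => ¬ ((4/c)^k * t ≤ ((Xw w).card : ℝ))), ((Xw w).card : ℝ)
          ≤ (m : ℝ) * ((c/4) * n) := by
        calc ∑ w ∈ Cs.filter (fun w => ¬ ((4/c)^k * t ≤ ((Xw w).card : ℝ))), ((Xw w).card : ℝ)
            ≤ ∑ _w ∈ Cs.filter (fun w => ¬ ((4/c)^k * t ≤ ((Xw w).card : ℝ))), ((c/4) * n) := by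
              refine Finset.sum_le_sum ?_
              intro w hw
              have := (Finset.mem_filter.1 hw).2
              push_neg at this
              linarith
          _ = ((Cs.filter (fun w => ¬ ((4/c)^k * t ≤ ((Xw w).card : ℝ)))).card : ℝ) * ((c/4) * n) := by
              rw [Finset.sum_const, nsmul_eq_mul]
          _ ≤ (m : ℝ) * ((c/4) * n) := by
              have hle : (Cs.filter (fun w => ¬ ((4/c)^k * t ≤ ((Xw w).card : ℝ)))).card ≤ m := by
                rw [hm]; exact Finset.card_filter_le _ _
              have : ((Cs.filter (fun w => ¬ ((4/c)^k * t ≤ ((Xw w).card : ℝ)))).card : ℝ) ≤ (m:ℝ) := by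
                exact_mod_cast hle
              have hnn : (0:ℝ) ≤ (c/4) * n := by positivity
              nlinarith
      have hcast : (↑(∑ w ∈ Cs, (Xw w).card) : ℝ) = ∑ w ∈ Cs, ((Xw w).card : ℝ) := by
        push_cast; ring
      nlinarith [claimB, hsplit2, hbad]
    -- apply the induction hypothesis below every child in D
    have hIH : ∀ w : V, ∃ Yf : Finset W, w ∈ D →
        ((↑Yf : Set W) ⊆ (↑(Xw w) : Set W)
          ∧ (c/4)^k * ((Xw w).card : ℝ) ≤ (Yf.card : ℝ)
          ∧ ∀ v ∈ Yf, GoodAt c T r G φ k w v) := by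
      intro w
      by_cases hw : w ∈ D
      · have hwC : IsChild T r u w := (hCsmem w).1 (hDsub hw)
        have hwdesc : Desc T r u w ∧ T.dist u w = 1 := child_desc hT hwC
        have hbig' : ∀ x : V, Desc T r w x → T.dist w x < k →
            (4/c)^k * t ≤ (Set.ncard {z : V | IsChild T r x z} : ℝ) := by
          intro x hx hxk
          obtain ⟨hdx, hde⟩ := desc_trans hT hwdesc.1 hx
          have : T.dist u x < k + 1 := by omega
          exact le_trans (by nlinarith [hpow_le k (k+1) (Nat.le_succ k), htpos]) (hbig x hdx this)
        have hzero' : ∀ x : V, Desc T r w x → k ≤ T.dist w x →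
            {z : V | IsChild T r x z} = ∅ := by
          intro x hx hxk
          obtain ⟨hdx, hde⟩ := desc_trans hT hwdesc.1 hx
          exact hzero x hdx (by omega)
        have hXsub : (↑(Xw w) : Set W) ⊆ (Set.range ⇑φ ∪ G.neighborSet (φ w))ᶜ := by
          intro x hx
          have hx' : x ∈ Xw w := hx
          rw [hXw] at hx'
          simp only [Finset.mem_filter] at hx'
          obtain ⟨hx1, hx2⟩ := hx'
          simp only [Set.mem_compl_iff, Set.mem_union, SimpleGraph.mem_neighborSet]
          push_neg
          exact ⟨hXrange x ((hXfmem x).1 hx1), hx2⟩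
        have hXcard' : (4/c)^k * t ≤ ((↑(Xw w) : Set W).ncard : ℝ) := by
          rw [Set.ncard_coe_finset]
          exact (Finset.mem_filter.1 hw).2
        obtain ⟨Y, hY1, hY2, hY3⟩ := IH w hbig' hzero' (↑(Xw w)) hXsub hXcard'
        have hYfin : Y.Finite := Set.toFinite _
        refine ⟨hYfin.toFinset, fun _ => ⟨?_, ?_, ?_⟩⟩
        · rw [Set.Finite.coe_toFinset]; exact hY1
        · have h6 := hY2
          rw [Set.ncard_coe_finset] at h6
          have hcard : hYfin.toFinset.card = Y.ncard := by
            rw [← Set.ncard_coe_finset, Set.Finite.coe_toFinset]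
          rw [hcard]
          exact h6
        · intro v hv
          exact hY3 v ((Set.Finite.mem_toFinset hYfin).1 hv)
      · exact ⟨∅, fun h => absurd h hw⟩
    choose Yf hYf using hIH
    have hYsubXf : ∀ w ∈ D, Yf w ⊆ Xf := by
      intro w hw
      intro x hx
      have h1 := (hYf w hw).1 (Finset.mem_coe.2 hx)
      exact Finset.mem_of_mem_filter x (Finset.mem_coe.1 h1)
    -- double counting
    set dcount : W → ℕ := fun v => (D.filter (fun w => v ∈ Yf w)).card with hdcount
    have hswap : ∑ w ∈ D, (Yf w).card = ∑ v ∈ Xf, dcount v := by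
      have h1 : ∀ w ∈ D, (Yf w).card = ∑ v ∈ Xf, if v ∈ Yf w then 1 else 0 := by
        intro w hw
        rw [← Finset.card_filter]
        congr 1
        rw [Finset.filter_mem_eq_inter, Finset.inter_eq_right.2 (hYsubXf w hw)]
      rw [Finset.sum_congr rfl h1, Finset.sum_comm]
      refine Finset.sum_congr rfl ?_
      intro v _
      rw [hdcount]
      exact (Finset.card_filter _ _).symm
    have hsumY : 3 * (c/4)^(k+1) * m * n ≤ ∑ w ∈ D, ((Yf w).card : ℝ) := by
      have h1 : ∑ w ∈ D, (c/4)^k * ((Xw w).card : ℝ) ≤ ∑ w ∈ D, ((Yf w).card : ℝ) :=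
        Finset.sum_le_sum (fun w hw => (hYf w hw).2.1)
      have h2 : (c/4)^k * ((3*c/4) * m * n) ≤ (c/4)^k * ∑ w ∈ D, ((Xw w).card : ℝ) := by
        have := pow_pos hc4pos k
        nlinarith [claimC]
      have h3 : ∑ w ∈ D, (c/4)^k * ((Xw w).card : ℝ) = (c/4)^k * ∑ w ∈ D, ((Xw w).card : ℝ) :=
        (Finset.mul_sum _ _ _).symm
      have h4 : (c/4)^k * ((3*c/4) * m * n) = 3 * (c/4)^(k+1) * m * n := by ring
      linarith
    -- select the good vertices
    set Yfin : Finset W := Xf.filter (fun v => (c/4)^(k+1) * m ≤ (dcount v : ℝ)) with hYfin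
    have hdle : ∀ v, (dcount v : ℝ) ≤ (m : ℝ) := by
      intro v
      have : dcount v ≤ m := by
        rw [hdcount, hm]
        exact le_trans (Finset.card_filter_le _ _) (Finset.card_le_card hDsub)
      exact_mod_cast this
    have hupper : ∑ v ∈ Xf, (dcount v : ℝ)
        ≤ (Yfin.card : ℝ) * m + (n : ℝ) * ((c/4)^(k+1) * m) := by
      have hsplit3 : ∑ v ∈ Xf, (dcount v : ℝ)
          = (∑ v ∈ Yfin, (dcount v : ℝ))
            + ∑ v ∈ Xf.filter (fun v => ¬ ((c/4)^(k+1) * m ≤ (dcount v : ℝ))), (dcount v : ℝ) := by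
        rw [hYfin]
        exact (Finset.sum_filter_add_sum_filter_not Xf _ _).symm
      have h1 : ∑ v ∈ Yfin, (dcount v : ℝ) ≤ (Yfin.card : ℝ) * m := by
        calc ∑ v ∈ Yfin, (dcount v : ℝ) ≤ ∑ _v ∈ Yfin, (m : ℝ) :=
              Finset.sum_le_sum (fun v _ => hdle v)
          _ = (Yfin.card : ℝ) * m := by rw [Finset.sum_const, nsmul_eq_mul]
      have h2 : ∑ v ∈ Xf.filter (fun v => ¬ ((c/4)^(k+1) * m ≤ (dcount v : ℝ))), (dcount v : ℝ)
          ≤ (n : ℝ) * ((c/4)^(k+1) * m) := by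
        calc ∑ v ∈ Xf.filter (fun v => ¬ ((c/4)^(k+1) * m ≤ (dcount v : ℝ))), (dcount v : ℝ)
            ≤ ∑ _v ∈ Xf.filter (fun v => ¬ ((c/4)^(k+1) * m ≤ (dcount v : ℝ))), ((c/4)^(k+1) * m) := by
              refine Finset.sum_le_sum ?_
              intro v hv
              have := (Finset.mem_filter.1 hv).2
              push_neg at this
              linarith
          _ = ((Xf.filter (fun v => ¬ ((c/4)^(k+1) * m ≤ (dcount v : ℝ)))).card : ℝ) * ((c/4)^(k+1) * m) := by
              rw [Finset.sum_const, nsmul_eq_mul]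
          _ ≤ (n : ℝ) * ((c/4)^(k+1) * m) := by
              have hle : (Xf.filter (fun v => ¬ ((c/4)^(k+1) * m ≤ (dcount v : ℝ)))).card ≤ n := by
                rw [hn]; exact Finset.card_filter_le _ _
              have h5 : ((Xf.filter (fun v => ¬ ((c/4)^(k+1) * m ≤ (dcount v : ℝ)))).card : ℝ) ≤ (n:ℝ) := by
                exact_mod_cast hle
              have hnn : (0:ℝ) ≤ (c/4)^(k+1) * m := by positivity
              nlinarith
      linarith
    have hYfincard : (c/4)^(k+1) * n ≤ (Yfin.card : ℝ) := by
      have hcast1 : (↑(∑ w ∈ D, (Yf w).card) : ℝ) = ∑ w ∈ D, ((Yf w).card : ℝ) := by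
        push_cast; ring
      have hcast2 : (↑(∑ v ∈ Xf, dcount v) : ℝ) = ∑ v ∈ Xf, (dcount v : ℝ) := by
        push_cast; ring
      have heq : ∑ w ∈ D, ((Yf w).card : ℝ) = ∑ v ∈ Xf, (dcount v : ℝ) := by
        rw [← hcast1, ← hcast2]
        exact_mod_cast congrArg (Nat.cast (R := ℝ)) hswap
      have hmain : 3 * (c/4)^(k+1) * m * n ≤ (Yfin.card : ℝ) * m + (n : ℝ) * ((c/4)^(k+1) * m) := by
        linarith [hsumY, hupper, heq]
      have hmpos' : (0:ℝ) < m := by exact_mod_cast hmpos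
      nlinarith [pow_pos hc4pos (k+1), Nat.cast_nonneg (α := ℝ) n]
    -- conclude
    refine ⟨(↑Yfin : Set W), ?_, ?_, ?_⟩
    · intro v hv
      have hv' : v ∈ Yfin := hv
      exact (hXfmem v).1 (Finset.mem_of_mem_filter v hv')
    · rw [Set.ncard_coe_finset, hnX]
      exact hYfincard
    · intro v hv
      have hv' : v ∈ Yfin := hv
      have hvXf : v ∈ Xf := Finset.mem_of_mem_filter v hv'
      have hvX : v ∈ X := (hXfmem v).1 hvXf
      have hvrange : v ∉ Set.range ⇑φ := hXrange v hvX
      have hvcnt : (c/4)^(k+1) * m ≤ ((dcount v : ℕ) : ℝ) := by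
        rw [hYfin] at hv'
        exact (Finset.mem_filter.1 hv').2
      set chosen : Finset V := D.filter (fun w => v ∈ Yf w) with hchosen
      have hdc : dcount v = chosen.card := by rw [hdcount]
      rw [hdc] at hvcnt
      have hsubtrees : ∀ w : V, ∃ S : Set V, w ∈ chosen →
          (w ∈ S ∧ (∀ x ∈ S, Desc T r w x) ∧ (T.induce S).Connected ∧
            (∀ x ∈ S, 2 * (c/4)^(k+1) * (Set.ncard {z : V | IsChild T r x z} : ℝ) ≤
              (Set.ncard {z : V | z ∈ S ∧ IsChild T r x z} : ℝ)) ∧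
            ∀ x ∈ S, φ x ≠ v ∧ ¬ G.Adj v (φ x)) := by
        intro w
        by_cases hw : w ∈ chosen
        · have hwD : w ∈ D := (Finset.mem_filter.1 hw).1
          have hwY : v ∈ Yf w := (Finset.mem_filter.1 hw).2
          obtain ⟨_, S, hS⟩ := (hYf w hwD).2.2 v hwY
          exact ⟨S, fun _ => hS⟩
        · exact ⟨∅, fun h => absurd h hw⟩
      choose Sf hSf using hsubtrees
      have hchosen_child : ∀ w ∈ chosen, IsChild T r u w := by
        intro w hw
        exact (hCsmem w).1 (hDsub (Finset.mem_filter.1 hw).1)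
      refine ⟨hvrange, insert u (⋃ w ∈ (chosen : Set V), Sf w),
        Set.mem_insert _ _, ?_, ?_, ?_, ?_⟩
      · -- descendants
        intro x hx
        rcases Set.mem_insert_iff.1 hx with h | hx'
        · subst h; exact desc_refl T r x
        · obtain ⟨w, hwch, hxS⟩ := Set.mem_iUnion₂.1 hx'
          have hwch' : w ∈ chosen := hwch
          have hwdesc := (child_desc hT (hchosen_child w hwch')).1
          have hxdesc := ((hSf w hwch').2.1) x hxS
          exact (desc_trans hT hwdesc hxdesc).1
      · -- connectivity
        exact induce_union_connected T u chosen Sf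
          (fun i hi => (hSf i hi).2.2.1)
          (fun i hi => (hSf i hi).1)
          (fun i hi => (hchosen_child i hi).1)
      · -- the epsilon condition
        intro w hw
        rcases Set.mem_insert_iff.1 hw with h | hw'
        · subst h
          have hsub2 : (↑chosen : Set V)
              ⊆ {z : V | z ∈ insert w (⋃ w' ∈ (chosen : Set V), Sf w') ∧ IsChild T r w z} := by
            intro z hz
            have hz' : z ∈ chosen := hz
            refine ⟨Set.mem_insert_iff.2 (Or.inr (Set.mem_iUnion₂.2 ⟨z, hz, (hSf z hz').1⟩)), ?_⟩
            exact hchosen_child z hz'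
          have h7 : (chosen.card : ℝ)
              ≤ (Set.ncard {z : V | z ∈ insert w (⋃ w' ∈ (chosen : Set V), Sf w') ∧ IsChild T r w z} : ℝ) := by
            rw [← Set.ncard_coe_finset chosen]
            exact_mod_cast Set.ncard_le_ncard hsub2 (Set.toFinite _)
          have h8 : (Set.ncard {z : V | IsChild T r w z} : ℝ) = m := hmC
          rw [h8]
          have h9 : 2 * (c/4)^(k+1+1) * (m : ℝ) ≤ (c/4)^(k+1) * m := by
            have hp := pow_pos hc4pos (k+1)
            have hmn : (0:ℝ) ≤ (m:ℝ) := Nat.cast_nonneg m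
            have hps : (c/4)^(k+1+1) = (c/4)^(k+1) * (c/4) := pow_succ _ _
            rw [hps]
            nlinarith [mul_nonneg hp.le hmn]
          linarith [hvcnt]
        · obtain ⟨w0, hw0, hwS⟩ := Set.mem_iUnion₂.1 hw'
          have hw0' : w0 ∈ chosen := hw0
          have heps := (hSf w0 hw0').2.2.2.1 w hwS
          have hsub3 : {z : V | z ∈ Sf w0 ∧ IsChild T r w z}
              ⊆ {z : V | z ∈ insert u (⋃ w' ∈ (chosen : Set V), Sf w') ∧ IsChild T r w z} := by
            intro z hz
            exact ⟨Set.mem_insert_iff.2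
              (Or.inr (Set.mem_iUnion₂.2 ⟨w0, hw0, hz.1⟩)), hz.2⟩
          have hmono : (Set.ncard {z : V | z ∈ Sf w0 ∧ IsChild T r w z} : ℝ)
              ≤ (Set.ncard {z : V | z ∈ insert u (⋃ w' ∈ (chosen : Set V), Sf w') ∧ IsChild T r w z} : ℝ) := by
            exact_mod_cast Set.ncard_le_ncard hsub3 (Set.toFinite _)
          have hchnn : (0:ℝ) ≤ (Set.ncard {z : V | IsChild T r w z} : ℝ) := Nat.cast_nonneg _
          have hpowle : (c/4)^(k+1+1) ≤ (c/4)^(k+1) :=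
            pow_le_pow_of_le_one hc4pos.le hc4lt.le (Nat.le_succ (k+1))
          nlinarith [heps, hmono]
      · -- avoiding the closed neighbourhood of v
        intro x hx
        rcases Set.mem_insert_iff.1 hx with h | hx'
        · subst h
          refine ⟨fun hh => hvrange ⟨_, hh⟩, ?_⟩
          have h10 := hX1 hvX
          simp only [Set.mem_compl_iff, Set.mem_union, SimpleGraph.mem_neighborSet] at h10
          push_neg at h10
          exact fun hh => h10.2 hh.symm
        · obtain ⟨w0, hw0, hxS⟩ := Set.mem_iUnion₂.1 hx'
          exact (hSf w0 hw0).2.2.2.2 x hxS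


/-- given `c ∈ (0,1/2)`, integers `h ≥ 0`, `t ≥ 1`, a
`((4/c)^h·t, h)`-wide rooted tree `(T,r)`, a `(c,t)`-sparse graph `G`, a
skeleton `φ` from `(T,r)` to `G` and a set
`X ⊆ V(G) \\ (φ(V(T)) ∪ N_G(φ(r)))` with `|X| ≥ (4/c)^h·t`, there is `Y ⊆ X`
with `|Y| ≥ (c/4)^h·|X|` all of whose vertices are `2(c/4)^(h+1)`-good
for `φ`. -/
theorem stmt12 (c : ℝ) (hc0 : 0 < c) (hc2 : c < 1 / 2) (h t : ℕ) (ht : 1 ≤ t)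
    (V : Type) [Fintype V] (T : SimpleGraph V) (hT : T.IsTree) (r : V)
    (hwide : IsWide T r ((4 / c) ^ h * t) h)
    (W : Type) [Fintype W] (G : SimpleGraph W) (hG : CTSparse G c t)
    (φ : T →g G) (hφ : IsSkeleton T r G φ)
    (X : Set W) (hX : X ⊆ (Set.range ⇑φ ∪ G.neighborSet (φ r))ᶜ)
    (hXcard : (4 / c) ^ h * t ≤ (X.ncard : ℝ)) :
    ∃ Y : Set W, Y ⊆ X ∧ (c / 4) ^ h * X.ncard ≤ (Y.ncard : ℝ) ∧
      ∀ v ∈ Y, EpsGood T r G φ (2 * (c / 4) ^ (h + 1)) v := by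
  classical
  have hT' : T.Connected := hT.isConnected
  have hdepth : ∀ x : V, T.dist r x ≤ h := by
    intro x
    have hb : BddAbove (Set.range (T.dist r)) := (Set.finite_range _).bddAbove
    have h1 := le_csSup hb (Set.mem_range_self x)
    rw [← hwide.1]
    exact h1
  have hbig : ∀ w : V, Desc T r r w → T.dist r w < h →
      (4/c)^h * t ≤ (Set.ncard {z : V | IsChild T r w z} : ℝ) := by
    intro w _ hw
    exact hwide.2 w hw
  have hzero : ∀ w : V, Desc T r r w → h ≤ T.dist r w →
      {z : V | IsChild T r w z} = ∅ := by
    intro w _ hw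
    ext z
    simp only [Set.mem_setOf_eq, Set.mem_empty_iff_false, iff_false]
    intro hz
    have h2 := hdepth z
    have h3 := hz.2
    omega
  obtain ⟨Y, hY1, hY2, hY3⟩ :=
    aux_main c hc0 hc2 t ht V T hT' r W G hG φ hφ.1 h r hbig hzero X hX hXcard
  refine ⟨Y, hY1, hY2, ?_⟩
  intro v hv
  obtain ⟨hvr, S, hS1, _, hS3, hS4, hS5⟩ := hY3 v hv
  exact ⟨hvr, S, ⟨hS1, hS3, hS4⟩, hS5⟩
end
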